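/- arXiv:1403.2255 — 4 statements merged into one kernel-verified Lean document; each statement's English description precedes it below -/
import Mathlib

section
/- Let (a_n) be a non-negative real sequence with convergent sum S = Σ_{n=1}^∞ a_n < ∞. Define b_n = Σ_{l=1}^n 2^{l-n} a_l. Then liminf_{n→∞} n·b_n = 0. -/
open Filter Finset

/-- A nonnegative sequence whose values are frequently small has liminf 0. -/
lemma aux_liminf (f : ℕ → ℝ) (h0 : ∀ n, 0 ≤ f n)
    (hfreq : ∀ ε : ℝ, 0 < ε → ∃ᶠ n in atTop, f n < ε) :
    Filter.liminf f Filter.atTop = 0 := by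
  have hbdd : IsBoundedUnder (· ≥ ·) atTop f := Filter.isBoundedUnder_of ⟨0, h0⟩
  have hcob : IsCoboundedUnder (· ≥ ·) atTop f := by
    refine ⟨1, fun c hc => ?_⟩
    rw [Filter.eventually_map] at hc
    obtain ⟨n, hn1, hn2⟩ := (hc.and_frequently (hfreq 1 one_pos)).exists
    exact le_of_lt (lt_of_le_of_lt hn1 hn2)
  refine le_antisymm ?_ (Filter.le_liminf_of_le hcob (Eventually.of_forall h0))
  by_contra h
  push_neg at h
  have := Filter.liminf_le_of_frequently_le
    ((hfreq _ (by linarith : (0:ℝ) < liminf f atTop / 2)).mono fun n hn => le_of_lt hn) hbdd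
  linarith

/-- For a nonnegative summable sequence, `n * f n` is frequently small. -/
lemma aux_freq (f : ℕ → ℝ) (hs : Summable f)
    (ε : ℝ) (hε : 0 < ε) : ∃ᶠ n : ℕ in atTop, (n : ℝ) * f n < ε := by
  by_contra h
  rw [Filter.not_frequently] at h
  simp only [not_lt] at h
  obtain ⟨N, hN⟩ := Filter.eventually_atTop.1 h
  have hsum2 : Summable (fun n : ℕ => ε / ((n : ℝ) + (N + 1))) := by
    refine Summable.of_nonneg_of_le (fun n => by positivity) (fun n => ?_)
      ((summable_nat_add_iff (N + 1)).2 hs)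
    have h1 := hN (n + (N + 1)) (by omega)
    have hpos : (0 : ℝ) < (n : ℝ) + (N + 1) := by positivity
    rw [div_le_iff₀ hpos]
    calc ε ≤ ((n + (N + 1) : ℕ) : ℝ) * f (n + (N + 1)) := h1
      _ = f (n + (N + 1)) * ((n : ℝ) + (N + 1)) := by push_cast; ring
  have hsum3 : Summable (fun n : ℕ => ε / (n : ℝ)) := by
    have := (summable_nat_add_iff (k := N + 1) (f := fun n : ℕ => ε / (n : ℝ))).1 ?_
    · exact this
    · convert hsum2 using 2 with n
      · rfl
      · push_cast
        ring_nf
  have : Summable (fun n : ℕ => 1 / (n : ℝ)) := by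
    have := hsum3.mul_left ε⁻¹
    refine this.congr fun n => ?_
    field_simp
  exact Real.not_summable_one_div_natCast this

/-- The recursion `b (n+1) = b n / 2 + a (n+1)`. -/
lemma aux_bsucc (a : ℕ → ℝ) (n : ℕ) :
    (∑ l ∈ Finset.Icc 1 (n+1), (2 : ℝ) ^ ((l : ℤ) - ((n+1 : ℕ) : ℤ)) * a l)
      = (∑ l ∈ Finset.Icc 1 n, (2 : ℝ) ^ ((l : ℤ) - (n : ℤ)) * a l) / 2 + a (n+1) := by
  rw [Finset.sum_Icc_succ_top (by omega : 1 ≤ n + 1), Finset.sum_div]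
  congr 1
  · refine Finset.sum_congr rfl fun l hl => ?_
    have h2 : (2 : ℝ) ^ ((l : ℤ) - ((n+1 : ℕ) : ℤ)) = 2 ^ ((l : ℤ) - (n : ℤ)) / 2 := by
      push_cast
      rw [show (l : ℤ) - (n + 1) = ((l : ℤ) - n) - 1 by ring,
        zpow_sub₀ (two_ne_zero), zpow_one]
    rw [h2]
    ring
  · push_cast
    rw [sub_self, zpow_zero, one_mul]

/-- Summability of `b`. -/
lemma aux_summable (a : ℕ → ℝ) (ha : ∀ n, 0 ≤ a n) (hsum : Summable a) :
    Summable (fun n : ℕ => ∑ l ∈ Finset.Icc 1 n, (2 : ℝ) ^ ((l : ℤ) - (n : ℤ)) * a l) := by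
  set B : ℕ → ℝ := fun n => ∑ l ∈ Finset.Icc 1 n, (2 : ℝ) ^ ((l : ℤ) - (n : ℤ)) * a l with hB
  have hBnonneg : ∀ n, 0 ≤ B n := fun n =>
    Finset.sum_nonneg fun l _ => mul_nonneg (by positivity) (ha l)
  have hC : 0 ≤ ∑' n, a n := tsum_nonneg ha
  have hB0 : B 0 = 0 := by simp [hB]
  have hbound : ∀ N, ∑ n ∈ Finset.range N, B n ≤ 2 * ∑' n, a n := by
    intro N
    induction N with
    | zero => simpa using by linarith
    | succ N ih =>
      rw [Finset.sum_range_succ']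
      have hrec : ∑ n ∈ Finset.range N, B (n + 1)
          = (∑ n ∈ Finset.range N, B n) / 2 + ∑ n ∈ Finset.range N, a (n + 1) := by
        rw [Finset.sum_div, ← Finset.sum_add_distrib]
        exact Finset.sum_congr rfl fun n _ => aux_bsucc a n
      have hta : ∑ n ∈ Finset.range N, a (n + 1) ≤ ∑' n, a n := by
        have h1 : ∑ n ∈ Finset.range N, a (n + 1) ≤ ∑ n ∈ Finset.range (N + 1), a n := by
          rw [Finset.sum_range_succ']
          linarith [ha 0]
        exact h1.trans (Summable.sum_le_tsum _ (fun n _ => ha n) hsum)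
      rw [hrec, hB0]
      linarith
  exact summable_of_sum_range_le hBnonneg hbound

/-- If `(a_n)` is a non-negative sequence with convergent sum, and
`b n = ∑_{l=1}^n 2^(l-n) a_l`, then `liminf n * b n = 0`. -/
theorem stmt0 (a : ℕ → ℝ) (ha : ∀ n, 0 ≤ a n) (hsum : Summable a) :
    Filter.liminf
      (fun n : ℕ => (n : ℝ) * ∑ l ∈ Finset.Icc 1 n, (2 : ℝ) ^ ((l : ℤ) - (n : ℤ)) * a l)
      Filter.atTop = 0 := by
  refine aux_liminf _ (fun n => mul_nonneg (Nat.cast_nonneg n)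
    (Finset.sum_nonneg fun l _ => mul_nonneg (by positivity) (ha l))) ?_
  exact aux_freq _ (aux_summable a ha hsum)
end

section
/- Let ξ = a + ib ∈ ℂ^d with ξ·ξ = 0 and |ξ| > 2, and K̂_ξ(k) = 1/(−|k|² + i ξ·k). Then there is an absolute constant C such that for every k ∈ ℝ^d with |k| ≤ 2|ξ|, |K̂_ξ(k)| ≤ C/(|ξ| · dist(k, Γ_ξ)), where Γ_ξ = {k : −|k|² + i ξ·k = 0}. -/
lemma aux_sum {d : ℕ} (a b k : EuclideanSpace ℝ (Fin d)) :
    (∑ j, ((a j : ℂ) + (b j : ℂ) * Complex.I) * (k j : ℂ))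
      = ((inner ℝ a k : ℝ) : ℂ) + ((inner ℝ b k : ℝ) : ℂ) * Complex.I := by
  simp only [PiLp.inner_apply, RCLike.inner_apply, starRingEnd_apply, star_trivial]
  push_cast
  rw [Finset.sum_mul, ← Finset.sum_add_distrib]
  exact Finset.sum_congr rfl fun j _ => by ring

lemma aux_eq {d : ℕ} (a b k : EuclideanSpace ℝ (Fin d)) :
    -((‖k‖ ^ 2 : ℝ) : ℂ) + Complex.I * ∑ j, ((a j : ℂ) + (b j : ℂ) * Complex.I) * (k j : ℂ)
      = ((-(‖k‖ ^ 2 + (inner ℝ b k : ℝ)) : ℝ) : ℂ) + ((inner ℝ a k : ℝ) : ℂ) * Complex.I := by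
  rw [aux_sum]
  push_cast
  linear_combination ((inner ℝ b k : ℝ) : ℂ) * Complex.I_sq

lemma aux_norm {d : ℕ} (x y : EuclideanSpace ℝ (Fin d)) :
    ‖x + (2⁻¹ : ℝ) • y‖ ^ 2 = ‖x‖ ^ 2 + (inner ℝ y x : ℝ) + ‖y‖ ^ 2 / 4 := by
  rw [norm_add_sq_real, real_inner_smul_right, norm_smul, real_inner_comm]
  simp [mul_pow]
  ring

lemma aux_cond {d : ℕ} (a b : EuclideanSpace ℝ (Fin d))
    (hxi : ∑ j, ((a j : ℂ) + (b j : ℂ) * Complex.I) ^ 2 = 0) :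
    ‖a‖ ^ 2 = ‖b‖ ^ 2 ∧ (inner ℝ a b : ℝ) = 0 := by
  have hsq : ∀ j, ((a j : ℂ) + (b j : ℂ) * Complex.I) ^ 2
      = ((a j ^ 2 - b j ^ 2 : ℝ) : ℂ) + ((2 * a j * b j : ℝ) : ℂ) * Complex.I := by
    intro j
    push_cast
    linear_combination ((b j : ℂ)) ^ 2 * Complex.I_sq
  have h1 : ((∑ j, (a j ^ 2 - b j ^ 2) : ℝ) : ℂ)
      + ((∑ j, 2 * a j * b j : ℝ) : ℂ) * Complex.I = 0 := by
    rw [← hxi]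
    push_cast
    rw [Finset.sum_mul, ← Finset.sum_add_distrib]
    refine Finset.sum_congr rfl fun j _ => ?_
    rw [hsq j]; push_cast; ring
  rw [Complex.ext_iff] at h1
  simp [← Complex.ofReal_pow] at h1
  have hna : ‖a‖ ^ 2 = ∑ j, a j ^ 2 := by
    rw [EuclideanSpace.norm_eq, Real.sq_sqrt (Finset.sum_nonneg fun j _ => by positivity)]
    simp [Real.norm_eq_abs, sq_abs]
  have hnb : ‖b‖ ^ 2 = ∑ j, b j ^ 2 := by
    rw [EuclideanSpace.norm_eq, Real.sq_sqrt (Finset.sum_nonneg fun j _ => by positivity)]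
    simp [Real.norm_eq_abs, sq_abs]
  have hip : (inner ℝ a b : ℝ) = ∑ j, a j * b j := by
    simp [PiLp.inner_apply, RCLike.inner_apply]
    exact Finset.sum_congr rfl fun j _ => mul_comm _ _
  constructor
  · rw [hna, hnb]; linarith [h1.1]
  · rw [hip]
    have h2 : ∑ j, 2 * a j * b j = 2 * ∑ j, a j * b j := by
      rw [Finset.mul_sum]; exact Finset.sum_congr rfl fun j _ => by ring
    have := h1.2
    rw [h2] at this
    linarith

set_option maxHeartbeats 1000000 in
/-- For `ξ = a + ib` with `ξ·ξ = 0`, `|ξ| > 2`, and `|k| ≤ 2|ξ|`, one has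
`|K̂_ξ(k)| ≤ C/(|ξ| · dist(k, Γ_ξ))` for an absolute constant `C`, where
`Γ_ξ = {k : -|k|² + i ξ·k = 0}`. -/
theorem stmt10 (d : ℕ) :
    ∃ C > (0 : ℝ), ∀ a b : EuclideanSpace ℝ (Fin d),
      (∑ j, ((a j : ℂ) + (b j : ℂ) * Complex.I) ^ 2 = 0) →
      2 < Real.sqrt (‖a‖ ^ 2 + ‖b‖ ^ 2) →
      ∀ k : EuclideanSpace ℝ (Fin d), ‖k‖ ≤ 2 * Real.sqrt (‖a‖ ^ 2 + ‖b‖ ^ 2) →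
        ‖(1 / (-((‖k‖ ^ 2 : ℝ) : ℂ)
            + Complex.I * ∑ j, ((a j : ℂ) + (b j : ℂ) * Complex.I) * (k j : ℂ)))‖
          ≤ C / (Real.sqrt (‖a‖ ^ 2 + ‖b‖ ^ 2) *
              Metric.infDist k {k' : EuclideanSpace ℝ (Fin d) |
                -((‖k'‖ ^ 2 : ℝ) : ℂ)
                  + Complex.I * ∑ j, ((a j : ℂ) + (b j : ℂ) * Complex.I) * (k' j : ℂ) = 0}) := by
  refine ⟨50, by norm_num, ?_⟩
  intro a b hxi hr k hk
  obtain ⟨hab2, hip⟩ := aux_cond a b hxi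
  set r := Real.sqrt (‖a‖ ^ 2 + ‖b‖ ^ 2) with hrdef
  set Γ : Set (EuclideanSpace ℝ (Fin d)) := {k' : EuclideanSpace ℝ (Fin d) |
      -((‖k'‖ ^ 2 : ℝ) : ℂ)
        + Complex.I * ∑ j, ((a j : ℂ) + (b j : ℂ) * Complex.I) * (k' j : ℂ) = 0} with hΓdef
  set A := ‖a‖ with hAdef
  have hr0 : (0 : ℝ) < r := lt_trans two_pos hr
  have hr2 : r ^ 2 = ‖a‖ ^ 2 + ‖b‖ ^ 2 := Real.sq_sqrt (by positivity)
  have hbA : ‖b‖ = A := by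
    rw [hAdef, ← Real.sqrt_sq (norm_nonneg b), ← Real.sqrt_sq (norm_nonneg a), hab2]
  have hr2' : r ^ 2 = 2 * A ^ 2 := by rw [hr2, hab2, hbA]; ring
  have hApos : (0 : ℝ) < A := by nlinarith [norm_nonneg a]
  have hA0 : A ≠ 0 := hApos.ne'
  have hrA : r ≤ 1.5 * A := by nlinarith
  have hkA : ‖k‖ ≤ 3 * A := by nlinarith [norm_nonneg k]
  have hmem : ∀ p : EuclideanSpace ℝ (Fin d),
      (‖p‖ ^ 2 + (inner ℝ b p : ℝ) = 0) → ((inner ℝ a p : ℝ) = 0) → p ∈ Γ := by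
    intro p h1 h2
    show _ = 0
    rw [aux_eq, h1, h2]
    simp
  set s : ℂ := ((-(‖k‖ ^ 2 + (inner ℝ b k : ℝ)) : ℝ) : ℂ) + ((inner ℝ a k : ℝ) : ℂ) * Complex.I
    with hsdef
  set S := ‖s‖ with hSdef
  have hsre : s.re = -(‖k‖ ^ 2 + (inner ℝ b k : ℝ)) := by
    simp [hsdef, ← Complex.ofReal_pow]
  have hsim : s.im = (inner ℝ a k : ℝ) := by
    simp [hsdef, ← Complex.ofReal_pow]
  have hSre : |‖k‖ ^ 2 + (inner ℝ b k : ℝ)| ≤ S := by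
    have := Complex.abs_re_le_norm s
    rw [hsre, abs_neg] at this
    exact this
  have hSim : |(inner ℝ a k : ℝ)| ≤ S := by
    have := Complex.abs_im_le_norm s
    rw [hsim] at this
    exact this
  have hS0 : 0 ≤ S := norm_nonneg s
  have hSle : S ≤ 15 * A ^ 2 := by
    have h1 : S ≤ |s.re| + |s.im| := Complex.norm_le_abs_re_add_abs_im s
    rw [hsre, hsim, abs_neg] at h1
    have h2 : |(inner ℝ b k : ℝ)| ≤ ‖b‖ * ‖k‖ := abs_real_inner_le_norm b k
    have h3 : |(inner ℝ a k : ℝ)| ≤ ‖a‖ * ‖k‖ := abs_real_inner_le_norm a k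
    have h4 : |‖k‖ ^ 2 + (inner ℝ b k : ℝ)| ≤ ‖k‖ ^ 2 + |(inner ℝ b k : ℝ)| := by
      calc |‖k‖ ^ 2 + (inner ℝ b k : ℝ)| ≤ |‖k‖ ^ 2| + |(inner ℝ b k : ℝ)| := abs_add_le _ _
        _ = ‖k‖ ^ 2 + |(inner ℝ b k : ℝ)| := by rw [abs_of_nonneg (by positivity)]
    rw [hbA] at h2
    rw [← hAdef] at h3
    nlinarith [norm_nonneg k]
  set t : ℝ := (inner ℝ a k : ℝ) / A ^ 2 with htdef
  set k₁ := k - t • a with hk1def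
  have hak1 : (inner ℝ a k₁ : ℝ) = 0 := by
    rw [hk1def, inner_sub_right, real_inner_smul_right, real_inner_self_eq_norm_sq, htdef,
      ← hAdef]
    field_simp
    ring
  have hip' : (inner ℝ b a : ℝ) = 0 := by rw [real_inner_comm]; exact hip
  have hbk1 : (inner ℝ b k₁ : ℝ) = (inner ℝ b k : ℝ) := by
    rw [hk1def, inner_sub_right, real_inner_smul_right, hip']
    ring
  have hkk1 : ‖k - k₁‖ = |(inner ℝ a k : ℝ)| / A := by
    have h1 : k - k₁ = t • a := by rw [hk1def]; abel
    rw [h1, norm_smul, Real.norm_eq_abs, htdef, ← hAdef, abs_div,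
      abs_of_nonneg (sq_nonneg A)]
    field_simp [hA0]
  have hak1' : (inner ℝ k₁ a : ℝ) = 0 := by rw [real_inner_comm]; exact hak1
  have halg : ∀ x B : ℝ, B ≠ 0 → (x / B ^ 2) ^ 2 * B ^ 2 = x ^ 2 / B ^ 2 := by
    intro x B hB
    field_simp
  have hknorm : ‖k‖ ^ 2 = ‖k₁‖ ^ 2 + t ^ 2 * A ^ 2 := by
    have h0 : k = k₁ + t • a := by rw [hk1def]; abel
    rw [h0, norm_add_sq_real, real_inner_smul_right, hak1', norm_smul, Real.norm_eq_abs,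
      mul_pow, sq_abs, ← hAdef]
    ring
  have hk1sq : ‖k₁‖ ^ 2 = ‖k‖ ^ 2 - (inner ℝ a k : ℝ) ^ 2 / A ^ 2 := by
    have h1 : t ^ 2 * A ^ 2 = (inner ℝ a k : ℝ) ^ 2 / A ^ 2 := by
      rw [htdef]; exact halg _ A hA0
    linarith [hknorm, h1]
  set w := k₁ + (2⁻¹ : ℝ) • b with hwdef
  have hw2 : ‖w‖ ^ 2 = ‖k‖ ^ 2 + (inner ℝ b k : ℝ) - (inner ℝ a k : ℝ) ^ 2 / A ^ 2 + A ^ 2 / 4 := by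
    rw [hwdef, aux_norm, hk1sq, hbk1, hbA]
    ring
  have hdiff : |‖w‖ ^ 2 - (A / 2) ^ 2| ≤ 16 * S := by
    have h1 : ‖w‖ ^ 2 - (A / 2) ^ 2
        = (‖k‖ ^ 2 + (inner ℝ b k : ℝ)) - (inner ℝ a k : ℝ) ^ 2 / A ^ 2 := by
      rw [hw2]; ring
    rw [h1]
    have h2 : |(‖k‖ ^ 2 + (inner ℝ b k : ℝ)) - (inner ℝ a k : ℝ) ^ 2 / A ^ 2|
        ≤ |‖k‖ ^ 2 + (inner ℝ b k : ℝ)| + (inner ℝ a k : ℝ) ^ 2 / A ^ 2 := by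
      calc _ ≤ |‖k‖ ^ 2 + (inner ℝ b k : ℝ)| + |(inner ℝ a k : ℝ) ^ 2 / A ^ 2| := abs_sub _ _
        _ = _ := by
          rw [abs_of_nonneg (div_nonneg (sq_nonneg ((inner ℝ a k : ℝ))) (sq_nonneg A))]
    have h3 : (inner ℝ a k : ℝ) ^ 2 ≤ S ^ 2 := by
      nlinarith [hSim, abs_nonneg (inner ℝ a k : ℝ), sq_abs (inner ℝ a k : ℝ)]
    have h4 : (inner ℝ a k : ℝ) ^ 2 / A ^ 2 ≤ 15 * S := by
      rw [div_le_iff₀ (pow_pos hApos 2)]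
      nlinarith
    linarith
  have hrho : |‖w‖ - A / 2| ≤ 32 * S / A := by
    have h1 : |‖w‖ - A / 2| * (A / 2) ≤ |‖w‖ ^ 2 - (A / 2) ^ 2| := by
      rw [show ‖w‖ ^ 2 - (A / 2) ^ 2 = (‖w‖ - A / 2) * (‖w‖ + A / 2) by ring, abs_mul]
      have h2 : A / 2 ≤ |‖w‖ + A / 2| := by
        rw [abs_of_nonneg (by positivity)]
        linarith [norm_nonneg w]
      exact mul_le_mul_of_nonneg_left h2 (abs_nonneg _)
    rw [le_div_iff₀ hApos]
    nlinarith [abs_nonneg (‖w‖ - A / 2)]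
  obtain ⟨p, hpΓ, hk1p⟩ : ∃ p ∈ Γ, ‖k₁ - p‖ ≤ 32 * S / A := by
    by_cases hw0 : w = 0
    · refine ⟨0, hmem 0 (by simp) (by simp), ?_⟩
      have hzero : k₁ + (2⁻¹ : ℝ) • b = 0 := by rw [← hwdef, hw0]
      have hk1b : k₁ = -((2⁻¹ : ℝ) • b) := eq_neg_of_add_eq_zero_left hzero
      have h1 : ‖k₁ - 0‖ = A / 2 := by
        rw [sub_zero, hk1b, norm_neg, norm_smul, Real.norm_eq_abs, hbA]
        rw [abs_of_nonneg (by norm_num : (0:ℝ) ≤ (2:ℝ)⁻¹)]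
        ring
      have h2 : |‖w‖ - A / 2| = A / 2 := by
        rw [hw0, norm_zero, zero_sub, abs_neg, abs_of_nonneg (by linarith : (0:ℝ) ≤ A / 2)]
      rw [h1]
      exact h2 ▸ hrho
    · have hwpos : 0 < ‖w‖ := norm_pos_iff.mpr hw0
      set c : ℝ := (A / 2) / ‖w‖ with hcdef
      refine ⟨c • w - (2⁻¹ : ℝ) • b, hmem _ ?_ ?_, ?_⟩
      · have h1 : c • w - (2⁻¹ : ℝ) • b + (2⁻¹ : ℝ) • b = c • w := by abel
        have h2 := aux_norm (c • w - (2⁻¹ : ℝ) • b) b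
        rw [h1] at h2
        have h3 : ‖c • w‖ ^ 2 = (A / 2) ^ 2 := by
          rw [norm_smul, Real.norm_eq_abs, mul_pow, sq_abs, hcdef]
          field_simp [hwpos.ne']
        rw [h3, hbA] at h2
        linear_combination -h2
      · rw [inner_sub_right, real_inner_smul_right, real_inner_smul_right, hip,
          hwdef, inner_add_right, real_inner_smul_right, hak1, hip]
        ring
      · have h5 : k₁ - (c • w - (2⁻¹ : ℝ) • b) = (1 - c) • w := by
          rw [sub_smul, one_smul, hwdef]
          abel
        rw [h5, norm_smul, Real.norm_eq_abs]
        have h6 : |1 - c| * ‖w‖ = |‖w‖ - A / 2| := by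
          rw [← abs_of_nonneg hwpos.le, ← abs_mul]
          congr 1
          rw [hcdef]
          field_simp [hwpos.ne']
          rw [abs_of_nonneg hwpos.le]
        rw [h6]
        exact hrho
  have hdist : Metric.infDist k Γ ≤ 33 * S / A := by
    have h1 : Metric.infDist k Γ ≤ dist k p := Metric.infDist_le_dist_of_mem hpΓ
    have h2 : dist k p ≤ ‖k - k₁‖ + ‖k₁ - p‖ := by
      rw [dist_eq_norm, show k - p = (k - k₁) + (k₁ - p) by abel]
      exact norm_add_le _ _
    have h3 : ‖k - k₁‖ ≤ S / A := by
      rw [hkk1]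
      exact (div_le_div_iff_of_pos_right hApos).mpr hSim
    have h4 : S / A + 32 * S / A = 33 * S / A := by ring
    linarith
  rw [aux_eq, ← hsdef]
  by_cases hs : s = 0
  · rw [hs]
    simp only [div_zero, norm_zero]
    exact div_nonneg (by norm_num) (mul_nonneg hr0.le Metric.infDist_nonneg)
  · have hSpos : 0 < S := norm_pos_iff.mpr hs
    have hΓne : Γ.Nonempty := ⟨0, hmem 0 (by simp) (by simp)⟩
    have hΓclosed : IsClosed Γ := by
      have c1 : Continuous fun k' : EuclideanSpace ℝ (Fin d) => ((‖k'‖ ^ 2 : ℝ) : ℂ) :=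
        Complex.continuous_ofReal.comp (continuous_norm.pow 2)
      have c2 : ∀ j, Continuous fun k' : EuclideanSpace ℝ (Fin d) => (k' j : ℂ) := fun j =>
        Complex.continuous_ofReal.comp
          ((continuous_apply j).comp (PiLp.continuous_ofLp 2 fun _ : Fin d => ℝ))
      exact isClosed_eq (c1.neg.add (continuous_const.mul (continuous_finset_sum _ fun j _ =>
        continuous_const.mul (c2 j)))) continuous_const
    have hkΓ : k ∉ Γ := by
      intro hkin
      apply hs
      have h := hkin
      rw [hΓdef] at h
      have h' : -((‖k‖ ^ 2 : ℝ) : ℂ)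
          + Complex.I * ∑ j, ((a j : ℂ) + (b j : ℂ) * Complex.I) * (k j : ℂ) = 0 := h
      rw [aux_eq, ← hsdef] at h'
      exact h'
    have hdpos : 0 < Metric.infDist k Γ := by
      rcases (Metric.infDist_nonneg (s := Γ) (x := k)).lt_or_eq with h | h
      · exact h
      · exfalso
        apply hkΓ
        rw [← hΓclosed.closure_eq]
        exact (Metric.mem_closure_iff_infDist_zero hΓne).mpr h.symm
    rw [norm_div, norm_one]
    rw [div_le_div_iff₀ hSpos (by positivity)]
    calc 1 * (r * Metric.infDist k Γ) ≤ (1.5 * A) * (33 * S / A) := by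
          rw [one_mul]
          exact mul_le_mul hrA hdist Metric.infDist_nonneg (by positivity)
      _ = 49.5 * S := by field_simp [hA0]; ring
      _ ≤ 50 * S := by linarith
end

section
/- Let d ≥ 3 and R > 10. For fixed t with 0 < t ≤ 2s and 1 < p < 2 with 0 < δ < 2 − p, the double integral ∫₀^{π/2} ∫₀^{π} θ₁^{d-2} θ₂^{d-3} / (|t/s − cos θ₁|^p + |sin θ₁ cos θ₂|^p) dθ₂ dθ₁ is bounded by C_p (1 + (1 − t/s)^{-(1-δ)/2}) when t ≤ s, for a constant C_p depending only on d, p, δ. -/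
open MeasureTheory Real

lemma sinAbsEq {y : ℝ} (h : |y| ≤ π) : Real.sin |y| = |Real.sin y| := by
  rcases abs_cases y with ⟨h1, h2⟩ | ⟨h1, h2⟩
  · rw [h1, abs_of_nonneg (Real.sin_nonneg_of_nonneg_of_le_pi h2 (h1 ▸ h))]
  · rw [h1, Real.sin_neg]
    rw [h1] at h
    rw [abs_of_nonpos (Real.sin_nonpos_of_nonpos_of_neg_pi_le h2.le (by linarith))]

lemma auxCosLB {θ : ℝ} (h0 : 0 ≤ θ) (hπ : θ ≤ π) : 2/π * |θ - π/2| ≤ |Real.cos θ| := by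
  have hpi := Real.pi_pos
  have h1 : |θ - π/2| ≤ π/2 := abs_le.2 ⟨by linarith, by linarith⟩
  have h2 : |π/2 - θ| ≤ π := by rw [abs_sub_comm]; linarith [abs_nonneg (θ - π/2), h1]
  calc 2/π * |θ - π/2| = 2/π * |π/2 - θ| := by rw [abs_sub_comm]
    _ ≤ Real.sin |π/2 - θ| := Real.mul_le_sin (abs_nonneg _) (by rwa [abs_sub_comm])
    _ = |Real.sin (π/2 - θ)| := sinAbsEq h2
    _ = |Real.cos θ| := by rw [Real.sin_pi_div_two_sub]

lemma auxCosDiff {x y : ℝ} (hx0 : 0 ≤ x) (hy0 : 0 ≤ y) (hx : x ≤ π/2) (hy : y ≤ π/2) :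
    2/π^2 * ((x + y) * |y - x|) ≤ |Real.cos x - Real.cos y| := by
  have hpi := Real.pi_pos
  rw [Real.cos_sub_cos]
  have hA : 0 ≤ (x + y)/2 := by linarith
  have hA2 : (x + y)/2 ≤ π/2 := by linarith
  have hsA : 2/π * ((x+y)/2) ≤ Real.sin ((x+y)/2) := Real.mul_le_sin hA hA2
  have hB : |(x - y)/2| ≤ π/2 := by
    rw [abs_div, abs_of_pos (by norm_num : (0:ℝ) < 2)]
    have : |x - y| ≤ π/2 := abs_le.2 ⟨by linarith, by linarith⟩
    linarith
  have hsB : 2/π * |(x - y)/2| ≤ Real.sin |(x - y)/2| :=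
    Real.mul_le_sin (abs_nonneg _) hB
  have hsB' : Real.sin |(x-y)/2| = |Real.sin ((x-y)/2)| := sinAbsEq (by linarith [abs_nonneg ((x-y)/2)])
  have habs : |(-2) * Real.sin ((x+y)/2) * Real.sin ((x-y)/2)|
      = 2 * Real.sin ((x+y)/2) * |Real.sin ((x-y)/2)| := by
    rw [abs_mul, abs_mul]
    rw [abs_of_nonneg (Real.sin_nonneg_of_nonneg_of_le_pi hA (by linarith))]
    norm_num
  rw [habs]
  have h1 : 0 ≤ 2/π * ((x+y)/2) := by positivity
  have h2 : 0 ≤ 2/π * |(x-y)/2| := by positivity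
  calc 2/π^2 * ((x + y) * |y - x|)
      = 2 * ((2/π * ((x+y)/2)) * (2/π * |(x-y)/2|)) := by
        rw [abs_sub_comm, abs_div, abs_of_pos (by norm_num : (0:ℝ) < 2)]
        field_simp
    _ ≤ 2 * (Real.sin ((x+y)/2) * |Real.sin ((x-y)/2)|) := by
        apply mul_le_mul_of_nonneg_left _ (by norm_num)
        exact mul_le_mul hsA (hsB.trans_eq hsB') h2 (le_trans h1 hsA)
    _ = 2 * Real.sin ((x+y)/2) * |Real.sin ((x-y)/2)| := by ring

lemma oneSubCos (y : ℝ) : 1 - Real.cos y ≤ y^2 / 2 := by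
  have h := Real.cos_sub_cos 0 y
  rw [Real.cos_zero] at h
  have e1 : ((0:ℝ) + y)/2 = y/2 := by ring
  have e2 : ((0:ℝ) - y)/2 = -(y/2) := by ring
  rw [e1, e2, Real.sin_neg] at h
  nlinarith [Real.sin_sq_le_sq (x := y/2)]

lemma aux1 {p a c T : ℝ} (hp1 : 1 < p) (ha : 0 < a) (hc : 0 < c) (hT : 0 < T) :
    ∫ x in Set.Ioc (0:ℝ) T, (a^p + (c*|x|)^p)⁻¹ ≤ (1 + 1/(p-1)) * a^(1-p) / c := by
  have hp0 : (0:ℝ) ≤ p := by linarith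
  have hap : 0 < a ^ p := Real.rpow_pos_of_pos ha p
  set G : ℝ → ℝ := fun x => (a^p + (c*|x|)^p)⁻¹ with hG
  have hGpos : ∀ x, 0 < a^p + (c*|x|)^p := fun x =>
    lt_add_of_lt_of_nonneg hap (Real.rpow_nonneg (by positivity) p)
  have hGcont : Continuous G := by
    apply Continuous.inv₀
    · exact continuous_const.add ((continuous_const.mul continuous_abs).rpow_const
        (fun x => Or.inr hp0))
    · exact fun x => (hGpos x).ne'
  have hGnonneg : ∀ x, 0 ≤ G x := fun x => inv_nonneg.2 (hGpos x).le
  set m := a / c with hm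
  have hm0 : 0 < m := div_pos ha hc
  set M := max T m with hMdef
  have hTM : T ≤ M := le_max_left _ _
  have hmM : m ≤ M := le_max_right _ _
  have hM0 : 0 < M := lt_of_lt_of_le hm0 hmM
  have hint : ∀ u v : ℝ, IntegrableOn G (Set.Ioc u v) := fun u v =>
    hGcont.integrableOn_Ioc
  -- step 1 : enlarge domain
  have step1 : ∫ x in Set.Ioc (0:ℝ) T, G x ≤ ∫ x in Set.Ioc (0:ℝ) M, G x := by
    apply setIntegral_mono_set (hint 0 M)
    · exact Filter.Eventually.of_forall fun x => hGnonneg x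
    · exact (Set.Ioc_subset_Ioc_right hTM).eventuallyLE
  -- split
  have step2 : ∫ x in Set.Ioc (0:ℝ) M, G x
      = (∫ x in Set.Ioc (0:ℝ) m, G x) + ∫ x in Set.Ioc m M, G x := by
    rw [← Set.Ioc_union_Ioc_eq_Ioc hm0.le hmM]
    exact setIntegral_union (Set.Ioc_disjoint_Ioc_of_le le_rfl) measurableSet_Ioc (hint 0 m) (hint m M)
  -- first piece
  have step3 : ∫ x in Set.Ioc (0:ℝ) m, G x ≤ a^(1-p) / c := by
    have : ∫ x in Set.Ioc (0:ℝ) m, G x ≤ ∫ _x in Set.Ioc (0:ℝ) m, (a^p)⁻¹ := by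
      apply setIntegral_mono_on (hint 0 m) (integrableOn_const (by
        simp [Real.volume_Ioc])) measurableSet_Ioc
      intro x _
      exact inv_anti₀ hap (le_add_of_nonneg_right (Real.rpow_nonneg (by positivity) p))
    rw [setIntegral_const] at this
    have hvol : volume.real (Set.Ioc (0:ℝ) m) = m := by
      simp [Real.volume_real_Ioc, hm0.le]
    rw [hvol] at this
    refine this.trans (le_of_eq ?_)
    rw [smul_eq_mul, hm, Real.rpow_sub ha, Real.rpow_one]
    simp [div_eq_mul_inv, mul_inv]
    ring
  -- second piece
  have hrpow_int : IntegrableOn (fun x : ℝ => x ^ (-p)) (Set.Ioc m M) := by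
    have h0 : (0:ℝ) ∉ Set.uIcc m M := by
      rw [Set.uIcc_of_le hmM]; intro h; exact absurd h.1 (not_le.2 hm0)
    exact (intervalIntegrable_iff_integrableOn_Ioc_of_le hmM).1
      (intervalIntegral.intervalIntegrable_rpow (Or.inr h0))
  have step4 : ∫ x in Set.Ioc m M, G x ≤ a^(1-p) / c * (1/(p-1)) := by
    have hmono : ∫ x in Set.Ioc m M, G x ≤ ∫ x in Set.Ioc m M, c^(-p) * x^(-p) := by
      apply setIntegral_mono_on (hint m M) (hrpow_int.const_mul _) measurableSet_Ioc
      intro x hx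
      have hx0 : 0 < x := lt_of_lt_of_le hm0 hx.1.le
      have hcx : 0 < c * x := mul_pos hc hx0
      have key : (a ^ p + (c * x) ^ p)⁻¹ ≤ (c*x) ^ (-p) := by
        rw [Real.rpow_neg hcx.le]
        exact inv_anti₀ (Real.rpow_pos_of_pos hcx p) (le_add_of_nonneg_left hap.le)
      rw [hG]
      simp only [abs_of_pos hx0]
      rw [← Real.mul_rpow hc.le hx0.le]
      exact key
    have hval : ∫ x in Set.Ioc m M, c^(-p) * x^(-p) = c^(-p) * ∫ x in Set.Ioc m M, x^(-p) := by
      exact integral_const_mul _ _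
    have h0uIcc : (0:ℝ) ∉ Set.uIcc m M := by
      rw [Set.uIcc_of_le hmM]; intro h; exact absurd h.1 (not_le.2 hm0)
    have hival : ∫ x in Set.Ioc m M, x^(-p) = (M ^ (-p+1) - m ^ (-p+1)) / (-p+1) := by
      rw [← intervalIntegral.integral_of_le hmM]
      exact integral_rpow (Or.inr ⟨by intro h; linarith, h0uIcc⟩)
    have hMp : 0 ≤ M ^ (-p+1) := Real.rpow_nonneg hM0.le _
    have hbound : ∫ x in Set.Ioc m M, x^(-p) ≤ m ^ (-p+1) / (p-1) := by
      rw [hival]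
      have heq : (M ^ (-p+1) - m ^ (-p+1)) / (-p+1) = (m ^ (-p+1) - M ^ (-p+1)) / (p-1) := by
        rw [div_eq_div_iff (by linarith) (by linarith)]
        ring
      rw [heq]
      apply div_le_div_of_nonneg_right _ (by linarith)
      linarith
    calc ∫ x in Set.Ioc m M, G x ≤ c^(-p) * ∫ x in Set.Ioc m M, x^(-p) := hmono.trans (le_of_eq hval)
      _ ≤ c^(-p) * (m ^ (-p+1) / (p-1)) := by
          apply mul_le_mul_of_nonneg_left hbound (Real.rpow_nonneg hc.le _)
      _ = a^(1-p) / c * (1/(p-1)) := by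
          rw [hm, Real.div_rpow ha.le hc.le, show (-p+1) = 1-p by ring]
          rw [show (-p) = (1-p)-1 by ring, Real.rpow_sub hc, Real.rpow_one]
          have h1 : c^(1-p) ≠ 0 := (Real.rpow_pos_of_pos hc _).ne'
          have h2 : c^(1-p)/c * (a^(1-p)/c^(1-p)/(p-1))
              = (c^(1-p)/c^(1-p)) * (a^(1-p)/c/(p-1)) := by ring
          rw [h2, div_self h1, one_mul, mul_one_div, div_div]
  calc ∫ x in Set.Ioc (0:ℝ) T, G x ≤ ∫ x in Set.Ioc (0:ℝ) M, G x := step1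
    _ = _ := step2
    _ ≤ a^(1-p)/c + a^(1-p)/c * (1/(p-1)) := add_le_add step3 step4
    _ = (1 + 1/(p-1)) * a^(1-p) / c := by ring

lemma aux2 {p a c : ℝ} (hp1 : 1 < p) (ha : 0 < a) (hc : 0 < c) :
    ∫ x in Set.Ioc (0:ℝ) π, (a^p + (c*|x - π/2|)^p)⁻¹ ≤ 2 * ((1 + 1/(p-1)) * a^(1-p) / c) := by
  have hpi := Real.pi_pos
  have hp0 : (0:ℝ) ≤ p := by linarith
  have hap : 0 < a ^ p := Real.rpow_pos_of_pos ha p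
  set g : ℝ → ℝ := fun u => (a^p + (c*|u|)^p)⁻¹ with hg
  have hgpos : ∀ x, 0 < a^p + (c*|x|)^p := fun x =>
    lt_add_of_lt_of_nonneg hap (Real.rpow_nonneg (by positivity) p)
  have hgcont : Continuous g :=
    Continuous.inv₀ (continuous_const.add ((continuous_const.mul continuous_abs).rpow_const
        (fun x => Or.inr hp0))) (fun x => (hgpos x).ne')
  have hFg : (fun x => (a^p + (c*|x - π/2|)^p)⁻¹) = fun x => g (x - π/2) := rfl
  have hFcont : Continuous fun x : ℝ => g (x - π/2) :=
    hgcont.comp (continuous_id.sub continuous_const)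
  have key : ∫ x in Set.Ioc (0:ℝ) π, g (x - π/2) = 2 * ∫ x in Set.Ioc (0:ℝ) (π/2), g x := by
    rw [← intervalIntegral.integral_of_le hpi.le]
    rw [← intervalIntegral.integral_add_adjacent_intervals
      (a := 0) (b := π/2) (c := π) (hFcont.intervalIntegrable _ _) (hFcont.intervalIntegrable _ _)]
    have h1 : ∫ x in (0:ℝ)..(π/2), g (x - π/2) = ∫ x in (0:ℝ)..(π/2), g x := by
      have : ∀ x : ℝ, g (x - π/2) = g (π/2 - x) := by
        intro x; simp only [hg]; rw [abs_sub_comm]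
      simp_rw [this]
      rw [intervalIntegral.integral_comp_sub_left g (π/2)]
      norm_num
    have h2 : ∫ x in (π/2:ℝ)..π, g (x - π/2) = ∫ x in (0:ℝ)..(π/2), g x := by
      rw [intervalIntegral.integral_comp_sub_right g (π/2)]
      norm_num
      rw [show π - π/2 = π/2 by ring]
    rw [h1, h2, intervalIntegral.integral_of_le (by linarith : (0:ℝ) ≤ π/2)]
    ring
  rw [hFg, key]
  have := aux1 (a := a) (c := c) (T := π/2) hp1 ha hc (by linarith)
  linarith

lemma inner_bd (d : ℕ) (hd : 3 ≤ d) {p : ℝ} (hp1 : 1 < p) {θ₁ a : ℝ}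
    (hθ : θ₁ ∈ Set.Ioc 0 (π/2)) (ha : 0 < a) :
    ∫ θ₂ in Set.Ioc 0 π, θ₁^(d-2)*θ₂^(d-3)/(a^p + |Real.sin θ₁ * Real.cos θ₂|^p)
      ≤ (π^(d-1) * (1+1/(p-1))) * θ₁^(d-3) * a^(1-p) := by
  have hpi := Real.pi_pos
  have hp0 : (0:ℝ) ≤ p := by linarith
  have hap : 0 < a ^ p := Real.rpow_pos_of_pos ha p
  obtain ⟨hθ0, hθπ⟩ := hθ
  have hb : 0 < Real.sin θ₁ := Real.sin_pos_of_pos_of_lt_pi hθ0 (by linarith)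
  set b := Real.sin θ₁ with hbdef
  set c := 2/π * b with hcdef
  have hc : 0 < c := by positivity
  have hp1' : (0:ℝ) < p - 1 := by linarith
  have hX : 0 < (1 + 1/(p-1)) * a^(1-p) := by
    have h1 : (0:ℝ) < 1 + 1/(p-1) := by positivity
    exact mul_pos h1 (Real.rpow_pos_of_pos ha _)
  set H : ℝ → ℝ := fun θ₂ => θ₁^(d-2) * π^(d-3) * (a^p + (c*|θ₂ - π/2|)^p)⁻¹ with hHdef
  have hden2pos : ∀ x : ℝ, 0 < a^p + (c*|x - π/2|)^p := fun x =>
    lt_add_of_lt_of_nonneg hap (Real.rpow_nonneg (by positivity) p)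
  have hHcont : Continuous H := by
    apply continuous_const.mul
    exact Continuous.inv₀ (continuous_const.add
      (((continuous_const.mul ((continuous_id.sub continuous_const).abs)).rpow_const
        (fun x => Or.inr hp0)))) (fun x => (hden2pos x).ne')
  have hH_int : IntegrableOn H (Set.Ioc 0 π) := hHcont.integrableOn_Ioc
  have hmono : ∫ θ₂ in Set.Ioc 0 π, θ₁^(d-2)*θ₂^(d-3)/(a^p + |Real.sin θ₁ * Real.cos θ₂|^p)
      ≤ ∫ θ₂ in Set.Ioc 0 π, H θ₂ := by
    apply integral_mono_of_nonneg
    · filter_upwards [ae_restrict_mem measurableSet_Ioc] with θ₂ hθ₂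
      have h1 : (0:ℝ) ≤ a^p + |Real.sin θ₁ * Real.cos θ₂|^p :=
        add_nonneg hap.le (Real.rpow_nonneg (abs_nonneg _) p)
      exact div_nonneg (mul_nonneg (pow_nonneg hθ0.le _) (pow_nonneg hθ₂.1.le _)) h1
    · exact hH_int
    · filter_upwards [ae_restrict_mem measurableSet_Ioc] with θ₂ hθ₂
      obtain ⟨h20, h2π⟩ := hθ₂
      have hcoslb : c * |θ₂ - π/2| ≤ |Real.sin θ₁ * Real.cos θ₂| := by
        rw [abs_mul, abs_of_pos hb]
        calc c * |θ₂ - π/2| = b * (2/π * |θ₂ - π/2|) := by rw [hcdef]; ring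
          _ ≤ b * |Real.cos θ₂| := by
              exact mul_le_mul_of_nonneg_left (auxCosLB h20.le h2π) hb.le
      have hden : a^p + (c*|θ₂ - π/2|)^p ≤ a^p + |Real.sin θ₁ * Real.cos θ₂|^p := by
        have := Real.rpow_le_rpow (by positivity) hcoslb hp0
        linarith
      rw [hHdef]
      simp only []
      rw [div_eq_mul_inv (θ₁^(d-2)*θ₂^(d-3))]
      refine mul_le_mul ?_ (inv_anti₀ (hden2pos θ₂) hden) (by positivity) (by positivity)
      exact mul_le_mul_of_nonneg_left (pow_le_pow_left₀ h20.le h2π _) (pow_nonneg hθ0.le _)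
  have hval : (∫ θ₂ in Set.Ioc 0 π, H θ₂)
      = θ₁^(d-2) * π^(d-3) * ∫ θ₂ in Set.Ioc 0 π, (a^p + (c*|θ₂ - π/2|)^p)⁻¹ :=
    integral_const_mul _ _
  have haux := aux2 (a := a) (c := c) hp1 ha hc
  have hfinal : θ₁^(d-2) * π^(d-3) * (2 * ((1 + 1/(p-1)) * a^(1-p) / c))
      ≤ (π^(d-1) * (1+1/(p-1))) * θ₁^(d-3) * a^(1-p) := by
    have hceq : 2 * ((1 + 1/(p-1)) * a^(1-p) / c) = (1 + 1/(p-1)) * a^(1-p) * (π/b) := by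
      rw [hcdef]; field_simp
    have hpow1 : θ₁^(d-2) = θ₁^(d-3) * θ₁ := by
      rw [← pow_succ]; congr 1; omega
    have hpow2 : π^(d-1) = π^(d-3) * π^2 := by
      rw [← pow_add]; congr 1; omega
    rw [hceq, hpow1, hpow2]
    have hθb : θ₁ / b ≤ π/2 := by
      rw [div_le_iff₀ hb]
      have := Real.mul_le_sin hθ0.le hθπ
      rw [← hbdef] at this
      calc θ₁ = π/2 * (2/π * θ₁) := by field_simp
        _ ≤ π/2 * b := mul_le_mul_of_nonneg_left this (by positivity)
    have hkey : (θ₁^(d-3) * π^(d-3) * ((1 + 1/(p-1)) * a^(1-p)) * π) * (θ₁/b)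
        ≤ (θ₁^(d-3) * π^(d-3) * ((1 + 1/(p-1)) * a^(1-p)) * π) * π := by
      apply mul_le_mul_of_nonneg_left (hθb.trans (by linarith)) (by positivity)
    calc θ₁^(d-3) * θ₁ * π^(d-3) * ((1 + 1/(p-1)) * a^(1-p) * (π/b))
        = (θ₁^(d-3) * π^(d-3) * ((1 + 1/(p-1)) * a^(1-p)) * π) * (θ₁/b) := by ring
      _ ≤ (θ₁^(d-3) * π^(d-3) * ((1 + 1/(p-1)) * a^(1-p)) * π) * π := hkey
      _ = π^(d-3) * π^2 * (1 + 1/(p-1)) * θ₁^(d-3) * a^(1-p) := by ring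
  have h2 : (∫ θ₂ in Set.Ioc 0 π, H θ₂)
      ≤ θ₁^(d-2) * π^(d-3) * (2 * ((1 + 1/(p-1)) * a^(1-p) / c)) := by
    rw [hval]
    exact mul_le_mul_of_nonneg_left haux (by positivity)
  exact hmono.trans (h2.trans hfinal)

lemma absRpow {r : ℝ} (hr1 : -1 < r) (hr0 : r < 0) (c : ℝ) :
    IntegrableOn (fun x => |x - c| ^ r) (Set.Ioc (c - π) (c + π)) volume ∧
    (∫ x in Set.Ioc (c - π) (c + π), |x - c| ^ r) = 2 * (π ^ (r+1) / (r+1)) := by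
  have hpi := Real.pi_pos
  have hr1' : (0:ℝ) < r + 1 := by linarith
  have hbase : IntervalIntegrable (fun x : ℝ => x ^ r) volume 0 π :=
    intervalIntegral.intervalIntegrable_rpow' hr1
  -- right piece
  have hReq : Set.EqOn (fun x : ℝ => (x - c) ^ r) (fun x => |x - c| ^ r)
      (Set.Ioc c (c + π)) := by
    intro x hx
    simp only []
    rw [abs_of_pos (by linarith [hx.1] : (0:ℝ) < x - c)]
  have hRint : IntegrableOn (fun x : ℝ => (x - c) ^ r) (Set.Ioc c (c + π)) := by
    have h := hbase.comp_sub_right c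
    rw [zero_add] at h
    rw [intervalIntegrable_iff_integrableOn_Ioc_of_le (by linarith)] at h
    have : c + π = π + c := by ring
    rw [this]
    exact h
  have hRint' : IntegrableOn (fun x : ℝ => |x - c| ^ r) (Set.Ioc c (c + π)) :=
    hRint.congr_fun hReq measurableSet_Ioc
  -- left piece
  have hLeq : Set.EqOn (fun x : ℝ => (c - x) ^ r) (fun x => |x - c| ^ r)
      (Set.Ioc (c - π) c) := by
    intro x hx
    simp only []
    rcases eq_or_lt_of_le hx.2 with h | h
    · rw [h]; simp
    · rw [abs_of_neg (by linarith : x - c < 0), neg_sub]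
  have hLint : IntegrableOn (fun x : ℝ => (c - x) ^ r) (Set.Ioc (c - π) c) := by
    have h := (hbase.comp_sub_left c).symm
    rw [sub_zero] at h
    rw [intervalIntegrable_iff_integrableOn_Ioc_of_le (by linarith)] at h
    exact h
  have hLint' : IntegrableOn (fun x : ℝ => |x - c| ^ r) (Set.Ioc (c - π) c) :=
    hLint.congr_fun hLeq measurableSet_Ioc
  have hunion : Set.Ioc (c - π) c ∪ Set.Ioc c (c + π) = Set.Ioc (c - π) (c + π) :=
    Set.Ioc_union_Ioc_eq_Ioc (by linarith) (by linarith)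
  constructor
  · rw [← hunion]; exact hLint'.union hRint'
  · rw [← hunion, setIntegral_union (Set.Ioc_disjoint_Ioc_of_le le_rfl) measurableSet_Ioc hLint' hRint']
    have hval0 : ∫ x in (0:ℝ)..π, x ^ r = π ^ (r+1) / (r+1) := by
      rw [integral_rpow (Or.inl hr1)]
      rw [Real.zero_rpow hr1'.ne', sub_zero]
    have hR : ∫ x in Set.Ioc c (c + π), |x - c| ^ r = π ^ (r+1) / (r+1) := by
      rw [← setIntegral_congr_fun measurableSet_Ioc hReq]
      rw [← intervalIntegral.integral_of_le (by linarith : c ≤ c + π)]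
      rw [intervalIntegral.integral_comp_sub_right (fun x => x ^ r) c]
      rw [sub_self, add_sub_cancel_left]
      exact hval0
    have hL : ∫ x in Set.Ioc (c - π) c, |x - c| ^ r = π ^ (r+1) / (r+1) := by
      rw [← setIntegral_congr_fun measurableSet_Ioc hLeq]
      rw [← intervalIntegral.integral_of_le (by linarith : c - π ≤ c)]
      rw [intervalIntegral.integral_comp_sub_left (fun x => x ^ r) c]
      rw [sub_self, sub_sub_cancel]
      exact hval0
    rw [hR, hL]; ring

set_option maxHeartbeats 1000000 in
/-- Angular averaging estimate: for `d ≥ 3`, `1 < p < 2`, `0 < δ < 2 - p`, there is a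
constant `C` (depending only on `d, p, δ`) such that for `R > 10` and `0 < t ≤ 2s`
with `t ≤ s`, the double angular integral is bounded by
`C (1 + (1 - t/s)^(-(1-δ)/2))`. -/
theorem stmt13 (d : ℕ) (hd : 3 ≤ d) (p δ : ℝ) (hp1 : 1 < p) (hp2 : p < 2)
    (hδ0 : 0 < δ) (hδ : δ < 2 - p) :
    ∃ C > (0 : ℝ), ∀ R : ℝ, 10 < R → ∀ s t : ℝ, 0 < t → t ≤ 2 * s → t ≤ s →
      (∫ θ₁ in Set.Ioc 0 (π / 2), ∫ θ₂ in Set.Ioc 0 π,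
          θ₁ ^ (d - 2) * θ₂ ^ (d - 3)
            / (|t / s - Real.cos θ₁| ^ p + |Real.sin θ₁ * Real.cos θ₂| ^ p))
        ≤ C * (1 + (1 - t / s) ^ (-((1 - δ) / 2))) := by
  have hpi := Real.pi_pos
  have hpi3 := Real.pi_gt_three
  have hp1' : (0:ℝ) < p - 1 := by linarith
  have hp2' : (0:ℝ) < 2 - p := by linarith
  have hδ2 : δ < 1 := by linarith
  have hp0 : (0:ℝ) ≤ p := by linarith
  have hexp : -(1:ℝ) < 1 - p := by linarith
  have hexp2 : (1:ℝ) - p < 0 := by linarith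
  set D : ℝ := π^(d-1) * (1 + 1/(p-1)) with hD
  have hDpos : 0 < D := by positivity
  have hc2 : (0:ℝ) < (2/π^2) ^ (1-p) := Real.rpow_pos_of_pos (by positivity) _
  set CA : ℝ := D * (π/2)^(d-3) * ((2/π^2)^(1-p)) * (2 * (π^(2-p)/(2-p))) with hCA
  have hCApos : 0 < CA := by
    have h1 : (0:ℝ) < π^(2-p) := Real.rpow_pos_of_pos hpi _
    positivity
  set q : ℝ := (d:ℝ) - 1 - 2*p with hq
  set CB : ℝ := D * ((2/π^2)^(1-p)) * ((π/2)^(q+1)/(q+1)) with hCB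
  set C : ℝ := CA + max CB 0 + 1 with hC
  have hmaxnn : (0:ℝ) ≤ max CB 0 := le_max_right _ _
  have hCpos : 0 < C := by positivity
  refine ⟨C, hCpos, ?_⟩
  intro R hR s t ht hts2 hts
  have hs : 0 < s := lt_of_lt_of_le ht hts
  have hr0 : 0 < t/s := div_pos ht hs
  have hr1 : t/s ≤ 1 := (div_le_one hs).2 hts
  have hXnn : 0 ≤ (1 - t/s) ^ (-((1-δ)/2)) := Real.rpow_nonneg (by linarith) _
  have hFnn : ∀ᵐ θ₁ ∂(volume.restrict (Set.Ioc 0 (π/2))),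
      0 ≤ ∫ θ₂ in Set.Ioc 0 π,
        θ₁^(d-2)*θ₂^(d-3)/(|t/s - Real.cos θ₁|^p + |Real.sin θ₁ * Real.cos θ₂|^p) := by
    filter_upwards [ae_restrict_mem measurableSet_Ioc] with θ₁ hθ₁
    apply setIntegral_nonneg measurableSet_Ioc
    intro θ₂ hθ₂
    have h1 : (0:ℝ) ≤ |t/s - Real.cos θ₁|^p + |Real.sin θ₁ * Real.cos θ₂|^p :=
      add_nonneg (Real.rpow_nonneg (abs_nonneg _) _) (Real.rpow_nonneg (abs_nonneg _) _)
    exact div_nonneg (mul_nonneg (pow_nonneg hθ₁.1.le _) (pow_nonneg hθ₂.1.le _)) h1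
  rcases lt_or_eq_of_le hr1 with hrlt | hreq
  · -- Case A : t/s < 1
    set θ₀ : ℝ := Real.arccos (t/s) with hθ₀def
    have hθ₀pos : 0 < θ₀ := Real.arccos_pos.2 hrlt
    have hθ₀le : θ₀ ≤ π/2 := Real.arccos_le_pi_div_two.2 hr0.le
    have hcosθ₀ : Real.cos θ₀ = t/s := Real.cos_arccos (by linarith) hr1
    have habs := absRpow hexp hexp2 θ₀
    have hθ₀p : 0 < θ₀^(1-p) := Real.rpow_pos_of_pos hθ₀pos _
    set K : ℝ := D * (π/2)^(d-3) * ((2/π^2)^(1-p)) * θ₀^(1-p) with hK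
    have hKpos : 0 < K := by positivity
    have hsub : Set.Ioc (0:ℝ) (π/2) ⊆ Set.Ioc (θ₀ - π) (θ₀ + π) :=
      Set.Ioc_subset_Ioc (by linarith) (by linarith)
    have hGint : IntegrableOn (fun x => K * |x - θ₀|^(1-p)) (Set.Ioc 0 (π/2)) :=
      (habs.1.mono_set hsub).const_mul K
    have hne : ∀ᵐ (x:ℝ) ∂volume, x ≠ θ₀ := by
      rw [ae_iff]
      have h1 : {x : ℝ | ¬ x ≠ θ₀} = {θ₀} := by ext y; simp
      rw [h1]
      exact Real.volume_singleton
    have hbd : ∀ᵐ x ∂(volume.restrict (Set.Ioc 0 (π/2))),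
        (∫ θ₂ in Set.Ioc 0 π,
          x^(d-2)*θ₂^(d-3)/(|t/s - Real.cos x|^p + |Real.sin x * Real.cos θ₂|^p))
        ≤ K * |x - θ₀|^(1-p) := by
      filter_upwards [ae_restrict_mem measurableSet_Ioc, ae_restrict_of_ae hne] with x hx hxθ
      have habs0 : 0 < |x - θ₀| := abs_pos.2 (sub_ne_zero.2 hxθ)
      have hlow : 0 < 2/π^2 * (θ₀ * |x - θ₀|) := by positivity
      have hcosd : 2/π^2 * (θ₀ * |x - θ₀|) ≤ |t/s - Real.cos x| := by
        rw [← hcosθ₀]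
        calc 2/π^2 * (θ₀ * |x - θ₀|) ≤ 2/π^2 * ((θ₀ + x) * |x - θ₀|) := by
              apply mul_le_mul_of_nonneg_left _ (by positivity)
              apply mul_le_mul_of_nonneg_right (by linarith [hx.1]) (abs_nonneg _)
          _ ≤ |Real.cos θ₀ - Real.cos x| :=
              auxCosDiff (Real.arccos_nonneg _) hx.1.le hθ₀le hx.2
      have ha : 0 < |t/s - Real.cos x| := lt_of_lt_of_le hlow hcosd
      calc (∫ θ₂ in Set.Ioc 0 π,
            x^(d-2)*θ₂^(d-3)/(|t/s - Real.cos x|^p + |Real.sin x * Real.cos θ₂|^p))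
          ≤ D * x^(d-3) * |t/s - Real.cos x|^(1-p) := by
            have h := inner_bd d hd hp1 hx ha
            rw [hD]
            calc _ ≤ (π^(d-1) * (1+1/(p-1))) * x^(d-3) * |t/s - Real.cos x|^(1-p) := h
              _ = π^(d-1) * (1 + 1/(p-1)) * x^(d-3) * |t/s - Real.cos x|^(1-p) := by ring
        _ ≤ D * (π/2)^(d-3) * (2/π^2 * (θ₀ * |x - θ₀|))^(1-p) := by
            apply mul_le_mul
            · exact mul_le_mul_of_nonneg_left (pow_le_pow_left₀ hx.1.le hx.2 _) hDpos.le
            · exact Real.rpow_le_rpow_of_nonpos hlow hcosd (by linarith)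
            · exact Real.rpow_nonneg (abs_nonneg _) _
            · positivity
        _ = K * |x - θ₀|^(1-p) := by
            rw [Real.mul_rpow (by positivity) (by positivity),
              Real.mul_rpow hθ₀pos.le (abs_nonneg _), hK]
            ring
    have hstep : (∫ θ₁ in Set.Ioc 0 (π/2), ∫ θ₂ in Set.Ioc 0 π,
          θ₁^(d-2)*θ₂^(d-3)/(|t/s - Real.cos θ₁|^p + |Real.sin θ₁ * Real.cos θ₂|^p))
        ≤ ∫ x in Set.Ioc 0 (π/2), K * |x - θ₀|^(1-p) :=
      integral_mono_of_nonneg hFnn hGint hbd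
    have hval : (∫ x in Set.Ioc 0 (π/2), K * |x - θ₀|^(1-p))
        ≤ K * (2 * (π^(2-p)/(2-p))) := by
      rw [integral_const_mul]
      apply mul_le_mul_of_nonneg_left _ hKpos.le
      have hmono2 : (∫ x in Set.Ioc 0 (π/2), |x - θ₀|^(1-p))
          ≤ ∫ x in Set.Ioc (θ₀ - π) (θ₀ + π), |x - θ₀|^(1-p) :=
        setIntegral_mono_set habs.1
          (Filter.Eventually.of_forall fun x => Real.rpow_nonneg (abs_nonneg _) _)
          hsub.eventuallyLE
      have heq : (1-p) + 1 = 2 - p := by ring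
      rw [habs.2, heq] at hmono2
      exact hmono2
    have hθchain : θ₀^(1-p) ≤ (1 - t/s) ^ (-((1-δ)/2)) := by
      have s1 : 2*(1 - t/s) ≤ θ₀^2 := by
        have h1 := oneSubCos θ₀
        rw [hcosθ₀] at h1
        linarith
      have hbase : (0:ℝ) < 2*(1 - t/s) := by linarith
      have s2 : Real.sqrt (2*(1 - t/s)) ≤ θ₀ := by
        rw [show θ₀ = Real.sqrt (θ₀^2) from (Real.sqrt_sq hθ₀pos.le).symm]
        exact Real.sqrt_le_sqrt s1
      have s3 : θ₀^(1-p) ≤ (Real.sqrt (2*(1-t/s)))^(1-p) :=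
        Real.rpow_le_rpow_of_nonpos (Real.sqrt_pos.2 hbase) s2 (by linarith)
      have s4 : (Real.sqrt (2*(1-t/s)))^(1-p) = (2*(1-t/s))^((1-p)/2) := by
        rw [Real.sqrt_eq_rpow, ← Real.rpow_mul hbase.le]
        congr 1
        ring
      have s5 : (2*(1-t/s))^((1-p)/2) ≤ (1-t/s)^((1-p)/2) := by
        rw [Real.mul_rpow (by norm_num) (by linarith)]
        have h2 : (2:ℝ)^((1-p)/2) ≤ 1 :=
          Real.rpow_le_one_of_one_le_of_nonpos one_le_two (by linarith)
        nlinarith [Real.rpow_nonneg (show (0:ℝ) ≤ 1 - t/s by linarith) ((1-p)/2),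
          Real.rpow_nonneg (show (0:ℝ) ≤ (2:ℝ) by norm_num) ((1-p)/2)]
      have s6 : (1-t/s)^((1-p)/2) ≤ (1-t/s)^(-((1-δ)/2)) :=
        Real.rpow_le_rpow_of_exponent_ge (by linarith) (by linarith) (by linarith)
      calc θ₀^(1-p) ≤ (Real.sqrt (2*(1-t/s)))^(1-p) := s3
        _ = (2*(1-t/s))^((1-p)/2) := s4
        _ ≤ (1-t/s)^((1-p)/2) := s5
        _ ≤ (1-t/s)^(-((1-δ)/2)) := s6
    calc (∫ θ₁ in Set.Ioc 0 (π/2), ∫ θ₂ in Set.Ioc 0 π,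
          θ₁^(d-2)*θ₂^(d-3)/(|t/s - Real.cos θ₁|^p + |Real.sin θ₁ * Real.cos θ₂|^p))
        ≤ K * (2 * (π^(2-p)/(2-p))) := hstep.trans hval
      _ = CA * θ₀^(1-p) := by rw [hCA, hK]; ring
      _ ≤ CA * ((1 - t/s) ^ (-((1-δ)/2))) := mul_le_mul_of_nonneg_left hθchain hCApos.le
      _ ≤ C * (1 + (1 - t/s) ^ (-((1-δ)/2))) := by
          have h1 : CA ≤ C := by rw [hC]; linarith
          nlinarith [mul_le_mul_of_nonneg_right h1 hXnn]
  · -- Case B : t/s = 1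
    rw [hreq] at hFnn ⊢
    rw [show (1:ℝ) - 1 = 0 by norm_num,
      Real.zero_rpow (show -((1-δ)/2) ≠ 0 by intro h; linarith)]
    by_cases hdq : -1 < q
    · -- B1 : integrable majorant
      have hG2int : IntegrableOn (fun x : ℝ => (D * ((2/π^2)^(1-p))) * x^q)
          (Set.Ioc 0 (π/2)) := by
        have h1 : IntegrableOn (fun x : ℝ => x^q) (Set.Ioc 0 (π/2)) :=
          (intervalIntegrable_iff_integrableOn_Ioc_of_le (by linarith)).1
            (intervalIntegral.intervalIntegrable_rpow' hdq)
        exact h1.const_mul _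
      have hbd2 : ∀ᵐ x ∂(volume.restrict (Set.Ioc 0 (π/2))),
          (∫ θ₂ in Set.Ioc 0 π,
            x^(d-2)*θ₂^(d-3)/(|1 - Real.cos x|^p + |Real.sin x * Real.cos θ₂|^p))
          ≤ (D * ((2/π^2)^(1-p))) * x^q := by
        filter_upwards [ae_restrict_mem measurableSet_Ioc] with x hx
        have hx0 := hx.1
        have hcosd : 2/π^2 * (x * x) ≤ |1 - Real.cos x| := by
          have h := auxCosDiff (le_refl (0:ℝ)) hx0.le (by linarith) hx.2
          rw [Real.cos_zero] at h
          simpa [abs_of_pos hx0] using h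
        have hlow : 0 < 2/π^2 * (x*x) := by positivity
        have ha : 0 < |1 - Real.cos x| := lt_of_lt_of_le hlow hcosd
        calc (∫ θ₂ in Set.Ioc 0 π,
              x^(d-2)*θ₂^(d-3)/(|1 - Real.cos x|^p + |Real.sin x * Real.cos θ₂|^p))
            ≤ D * x^(d-3) * |1 - Real.cos x|^(1-p) := by
              have h := inner_bd d hd hp1 hx ha
              rw [hD]
              calc _ ≤ (π^(d-1) * (1+1/(p-1))) * x^(d-3) * |1 - Real.cos x|^(1-p) := h
                _ = π^(d-1) * (1 + 1/(p-1)) * x^(d-3) * |1 - Real.cos x|^(1-p) := by ring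
          _ ≤ D * x^(d-3) * (2/π^2 * (x*x))^(1-p) := by
              apply mul_le_mul_of_nonneg_left
                (Real.rpow_le_rpow_of_nonpos hlow hcosd (by linarith)) (by positivity)
          _ = (D * ((2/π^2)^(1-p))) * x^q := by
              rw [Real.mul_rpow (by positivity) (by positivity)]
              have e2 : ((x*x : ℝ))^(1-p) = x^(2*(1-p)) := by
                rw [show (x*x:ℝ) = x^(2:ℕ) from (pow_two x).symm, ← Real.rpow_natCast x 2,
                  ← Real.rpow_mul hx0.le]
                norm_num
              have e3 : (x:ℝ)^(d-3) = x^(((d:ℝ)-3)) := by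
                rw [← Real.rpow_natCast x (d-3)]
                congr 1
                rw [Nat.cast_sub (by omega : 3 ≤ d)]
                norm_num
              have e4 : x^((d:ℝ)-3) * x^(2*(1-p)) = x^q := by
                rw [← Real.rpow_add hx0]
                congr 1
                rw [hq]; ring
              calc D * x^(d-3) * ((2/π^2)^(1-p) * (x*x)^(1-p))
                  = D * ((2/π^2)^(1-p)) * (x^((d:ℝ)-3) * x^(2*(1-p))) := by
                    rw [e2, e3]; ring
                _ = (D * ((2/π^2)^(1-p))) * x^q := by rw [e4]
      have hstep2 := integral_mono_of_nonneg hFnn hG2int hbd2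
      have hval2 : (∫ x in Set.Ioc (0:ℝ) (π/2), (D * ((2/π^2)^(1-p))) * x^q) = CB := by
        rw [integral_const_mul, hCB]
        congr 1
        rw [← intervalIntegral.integral_of_le (by linarith : (0:ℝ) ≤ π/2),
          integral_rpow (Or.inl hdq),
          Real.zero_rpow (show q + 1 ≠ 0 by intro h; linarith), sub_zero]
      have hCB_le : CB ≤ C := by
        rw [hC]
        have := le_max_left CB 0
        linarith
      calc (∫ θ₁ in Set.Ioc 0 (π/2), ∫ θ₂ in Set.Ioc 0 π,
            θ₁^(d-2)*θ₂^(d-3)/(|1 - Real.cos θ₁|^p + |Real.sin θ₁ * Real.cos θ₂|^p))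
          ≤ CB := hstep2.trans (le_of_eq hval2)
        _ ≤ C * (1 + 0) := by rw [add_zero, mul_one]; exact hCB_le
    · -- B2 : non-integrable, integral is zero
      have hnint : ¬ IntegrableOn (fun θ₁ => ∫ θ₂ in Set.Ioc 0 π,
          θ₁^(d-2)*θ₂^(d-3)/(|1 - Real.cos θ₁|^p + |Real.sin θ₁ * Real.cos θ₂|^p))
          (Set.Ioc 0 (π/2)) volume := by
        intro hInt
        have hq1 : q ≤ -1 := by linarith [not_lt.1 hdq]
        have hIoc12 : Set.Ioc (0:ℝ) (1/2) ⊆ Set.Ioc 0 (π/2) :=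
          Set.Ioc_subset_Ioc_right (by linarith)
        have hInt' := hInt.mono_set hIoc12
        have hφmeas : AEStronglyMeasurable (fun x : ℝ => x^q/2)
            (volume.restrict (Set.Ioc (0:ℝ) (1/2))) := by
          apply ContinuousOn.aestronglyMeasurable _ measurableSet_Ioc
          intro x hx
          exact ((Real.continuousAt_rpow_const x q (Or.inl hx.1.ne')).div_const 2).continuousWithinAt
        have hFlb : ∀ x ∈ Set.Ioc (0:ℝ) (1/2), x^q/2 ≤ ∫ θ₂ in Set.Ioc 0 π,
            x^(d-2)*θ₂^(d-3)/(|1 - Real.cos x|^p + |Real.sin x * Real.cos θ₂|^p) := by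
          intro x hx
          obtain ⟨hx0, hx12⟩ := hx
          have hxpi : x ≤ π/2 := by linarith
          have hcosd : 2/π^2 * (x * x) ≤ |1 - Real.cos x| := by
            have h := auxCosDiff (le_refl (0:ℝ)) hx0.le (by linarith) hxpi
            rw [Real.cos_zero] at h
            simpa [abs_of_pos hx0] using h
          have hA0 : 0 < |1 - Real.cos x| := lt_of_lt_of_le (by positivity) hcosd
          have hApos : 0 < |1 - Real.cos x|^p := Real.rpow_pos_of_pos hA0 _
          have hdenpos : ∀ θ₂ : ℝ, 0 < |1 - Real.cos x|^p + |Real.sin x * Real.cos θ₂|^p :=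
            fun θ₂ => lt_add_of_lt_of_nonneg hApos (Real.rpow_nonneg (abs_nonneg _) _)
          have hcont : Continuous (fun θ₂ : ℝ =>
              x^(d-2)*θ₂^(d-3)/(|1 - Real.cos x|^p + |Real.sin x * Real.cos θ₂|^p)) := by
            apply Continuous.div
            · exact continuous_const.mul (continuous_pow _)
            · exact continuous_const.add
                (((continuous_const.mul Real.continuous_cos).abs).rpow_const (fun y => Or.inr hp0))
            · exact fun θ₂ => (hdenpos θ₂).ne'
          have hint2 : IntegrableOn (fun θ₂ : ℝ =>
              x^(d-2)*θ₂^(d-3)/(|1 - Real.cos x|^p + |Real.sin x * Real.cos θ₂|^p))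
              (Set.Ioc 0 π) := hcont.integrableOn_Ioc
          have hEsub : Set.Ioc (π/2 - x) (π/2) ⊆ Set.Ioc 0 π :=
            Set.Ioc_subset_Ioc (by linarith) (by linarith)
          have hconstle : ∀ θ₂ ∈ Set.Ioc (π/2 - x) (π/2),
              x^(d-2)/(2*(x*x)^p)
              ≤ x^(d-2)*θ₂^(d-3)/(|1 - Real.cos x|^p + |Real.sin x * Real.cos θ₂|^p) := by
            intro θ₂ hθ₂
            have hθ₂0 : 0 < θ₂ := lt_trans (by linarith) hθ₂.1
            have h1cos : 1 - Real.cos x ≤ x*x := by nlinarith [oneSubCos x]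
            have habs1 : |1 - Real.cos x| = 1 - Real.cos x :=
              abs_of_nonneg (by linarith [Real.cos_le_one x])
            have t1 : |1 - Real.cos x|^p ≤ (x*x)^p := by
              apply Real.rpow_le_rpow (abs_nonneg _) _ hp0
              rw [habs1]; exact h1cos
            have hsinx : |Real.sin x| ≤ x :=
              (Real.abs_sin_le_abs).trans (le_of_eq (abs_of_pos hx0))
            have hcosθ₂ : |Real.cos θ₂| ≤ x := by
              have hc0 : 0 ≤ Real.cos θ₂ :=
                Real.cos_nonneg_of_mem_Icc ⟨by linarith [hθ₂.1], hθ₂.2⟩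
              rw [abs_of_nonneg hc0, ← Real.sin_pi_div_two_sub]
              calc Real.sin (π/2 - θ₂) ≤ π/2 - θ₂ := Real.sin_le (by linarith [hθ₂.2])
                _ ≤ x := by linarith [hθ₂.1]
            have t2 : |Real.sin x * Real.cos θ₂|^p ≤ (x*x)^p := by
              apply Real.rpow_le_rpow (abs_nonneg _) _ hp0
              rw [abs_mul]
              exact mul_le_mul hsinx hcosθ₂ (abs_nonneg _) hx0.le
            have hnum : x^(d-2) ≤ x^(d-2)*θ₂^(d-3) := by
              apply le_mul_of_one_le_right (pow_nonneg hx0.le _)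
              apply one_le_pow₀
              linarith [hθ₂.1]
            exact div_le_div₀ (mul_nonneg (pow_nonneg hx0.le _) (pow_nonneg hθ₂0.le _))
              hnum (hdenpos θ₂) (by linarith)
          have hcint : IntegrableOn (fun _ : ℝ => x^(d-2)/(2*(x*x)^p))
              (Set.Ioc (π/2 - x) (π/2)) :=
            integrableOn_const (by simp [Real.volume_Ioc])
          have hEc : (∫ _θ₂ in Set.Ioc (π/2 - x) (π/2), (x^(d-2)/(2*(x*x)^p) : ℝ))
              ≤ ∫ θ₂ in Set.Ioc (π/2 - x) (π/2),
                x^(d-2)*θ₂^(d-3)/(|1 - Real.cos x|^p + |Real.sin x * Real.cos θ₂|^p) :=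
            setIntegral_mono_on hcint (hint2.mono_set hEsub) measurableSet_Ioc hconstle
          have hEF : (∫ θ₂ in Set.Ioc (π/2 - x) (π/2),
                x^(d-2)*θ₂^(d-3)/(|1 - Real.cos x|^p + |Real.sin x * Real.cos θ₂|^p))
              ≤ ∫ θ₂ in Set.Ioc 0 π,
                x^(d-2)*θ₂^(d-3)/(|1 - Real.cos x|^p + |Real.sin x * Real.cos θ₂|^p) := by
            apply setIntegral_mono_set hint2 _ hEsub.eventuallyLE
            filter_upwards [ae_restrict_mem measurableSet_Ioc] with θ₂ hθ₂
            exact div_nonneg (mul_nonneg (pow_nonneg hx0.le _) (pow_nonneg hθ₂.1.le _))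
              (hdenpos θ₂).le
          have hconstval : (∫ _θ₂ in Set.Ioc (π/2 - x) (π/2), (x^(d-2)/(2*(x*x)^p) : ℝ))
              = x * (x^(d-2)/(2*(x*x)^p)) := by
            rw [setIntegral_const, smul_eq_mul]
            congr 1
            rw [Real.volume_real_Ioc, max_eq_left (by linarith)]
            ring
          have heq : x * (x^(d-2)/(2*(x*x)^p)) = x^q/2 := by
            have e1 : ((x*x:ℝ))^p = x^(2*p) := by
              rw [show (x*x:ℝ) = x^(2:ℕ) from (pow_two x).symm, ← Real.rpow_natCast x 2,
                ← Real.rpow_mul hx0.le]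
              norm_num
            have e2 : (x:ℝ)^(d-2) = x^(((d:ℝ)-2)) := by
              rw [← Real.rpow_natCast x (d-2)]
              congr 1
              rw [Nat.cast_sub (by omega : 2 ≤ d)]
              norm_num
            rw [e1, e2]
            rw [show x * (x^((d:ℝ)-2)/(2*x^(2*p))) = x^((d:ℝ)-2) * x / x^(2*p) / 2 by ring]
            rw [← Real.rpow_add_one hx0.ne', ← Real.rpow_sub hx0]
            congr 2
            rw [hq]; ring
          calc x^q/2 = x * (x^(d-2)/(2*(x*x)^p)) := heq.symm
            _ = ∫ _θ₂ in Set.Ioc (π/2-x) (π/2), (x^(d-2)/(2*(x*x)^p) : ℝ) := hconstval.symm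
            _ ≤ _ := hEc.trans hEF
        have hφint : Integrable (fun x : ℝ => x^q/2)
            (volume.restrict (Set.Ioc (0:ℝ) (1/2))) := by
          apply Integrable.mono' hInt' hφmeas
          filter_upwards [ae_restrict_mem measurableSet_Ioc] with x hx
          rw [Real.norm_eq_abs,
            abs_of_nonneg (div_nonneg (Real.rpow_nonneg hx.1.le _) (by norm_num))]
          exact hFlb x hx
        have hrint : IntegrableOn (fun x : ℝ => x^q) (Set.Ioo (0:ℝ) (1/2)) := by
          have h3 : (fun x : ℝ => 2*(x^q/2)) = fun x => x^q := funext fun x => by ring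
          have h4 := hφint.const_mul 2
          rw [h3] at h4
          exact IntegrableOn.mono_set h4 Set.Ioo_subset_Ioc_self
        have hcontra := (intervalIntegral.integrableOn_Ioo_rpow_iff (by norm_num : (0:ℝ) < 1/2)).1 hrint
        linarith
      rw [integral_undef hnint]
      positivity
end

section
/- Let ψ : ℝ^d → [0,∞) be a Schwartz function (or satisfy ψ(x) ≤ C_N (1+|x|)^{-N} for all N). Then there is a constant C such that for every ξ ∈ ℂ^d with ξ·ξ = 0, |ξ| > 2 and every k ∈ ℝ^d, ∫_{dist(η, Γ_ξ) ≤ 1} ψ(η − k) dη ≤ C, with C independent of ξ and k. -/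
open MeasureTheory

/-- For a non-negative rapidly decaying `ψ` on `ℝ^d`, the integral of `ψ(· - k)` over the
unit tubular neighborhood of the characteristic variety `Γ_ξ` is bounded uniformly in
`ξ = a + ib` (with `ξ·ξ = 0`, `|ξ| > 2`) and `k`. -/
theorem stmt15 (d : ℕ) (ψ : EuclideanSpace ℝ (Fin d) → ℝ)
    (hψ0 : ∀ x, 0 ≤ ψ x)
    (hdecay : ∀ N : ℕ, ∃ C > (0 : ℝ), ∀ x, ψ x ≤ C / (1 + ‖x‖) ^ N) :
    ∃ C > (0 : ℝ), ∀ a b : EuclideanSpace ℝ (Fin d),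
      (∑ j, ((a j : ℂ) + (b j : ℂ) * Complex.I) ^ 2 = 0) →
      2 < Real.sqrt (‖a‖ ^ 2 + ‖b‖ ^ 2) →
      ∀ k : EuclideanSpace ℝ (Fin d),
        (∫ η in {η : EuclideanSpace ℝ (Fin d) |
            Metric.infDist η {η' : EuclideanSpace ℝ (Fin d) |
              -((‖η'‖ ^ 2 : ℝ) : ℂ)
                + Complex.I * ∑ j, ((a j : ℂ) + (b j : ℂ) * Complex.I) * (η' j : ℂ) = 0}
              ≤ 1}, ψ (η - k)) ≤ C := by
  obtain ⟨Cd, hCd, hC⟩ := hdecay (d + 1)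
  set g : EuclideanSpace ℝ (Fin d) → ℝ :=
    fun x => Cd * (1 + ‖x‖) ^ (-(d + 1 : ℝ)) with hg
  have hint : Integrable (fun x : EuclideanSpace ℝ (Fin d) =>
      (1 + ‖x‖) ^ (-(d + 1 : ℝ))) := by
    apply integrable_one_add_norm
    simp [finrank_euclideanSpace]
  have hgint : Integrable g := hint.const_mul Cd
  have hψg : ∀ x, ψ x ≤ g x := by
    intro x
    have h1 : (0 : ℝ) < 1 + ‖x‖ := by positivity
    have hx := hC x
    have heq : (1 + ‖x‖) ^ (-(d + 1 : ℝ)) = ((1 + ‖x‖) ^ (d + 1 : ℕ))⁻¹ := by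
      rw [Real.rpow_neg h1.le]
      congr 1
      rw [← Real.rpow_natCast (1 + ‖x‖) (d + 1)]
      norm_num
    rw [hg]
    simp only [heq]
    calc ψ x ≤ Cd / (1 + ‖x‖) ^ (d + 1) := hx
      _ = Cd * ((1 + ‖x‖) ^ (d + 1 : ℕ))⁻¹ := by rw [div_eq_mul_inv]
  have hgnn : ∀ x, 0 ≤ g x := by
    intro x
    have h1 : (0 : ℝ) < 1 + ‖x‖ := by positivity
    exact mul_nonneg hCd.le (Real.rpow_nonneg h1.le _)
  refine ⟨(∫ x, g x) + 1, by positivity, ?_⟩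
  intro a b _ _ k
  set s : Set (EuclideanSpace ℝ (Fin d)) := {η : EuclideanSpace ℝ (Fin d) |
            Metric.infDist η {η' : EuclideanSpace ℝ (Fin d) |
              -((‖η'‖ ^ 2 : ℝ) : ℂ)
                + Complex.I * ∑ j, ((a j : ℂ) + (b j : ℂ) * Complex.I) * (η' j : ℂ) = 0}
              ≤ 1} with hs
  have hgk : Integrable (fun η => g (η - k)) := hgint.comp_sub_right k
  have hInt : (∫ x, g x) ≥ 0 := integral_nonneg hgnn
  by_cases hI : IntegrableOn (fun η => ψ (η - k)) s volume
  · calc (∫ η in s, ψ (η - k))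
        ≤ ∫ η in s, g (η - k) :=
          setIntegral_mono hI hgk.integrableOn (fun x => hψg _)
      _ ≤ ∫ η, g (η - k) :=
          setIntegral_le_integral hgk (Filter.Eventually.of_forall fun x => hgnn _)
      _ = ∫ x, g x := integral_sub_right_eq_self g k
      _ ≤ (∫ x, g x) + 1 := by linarith
  · rw [integral_undef hI]
    linarith
end
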